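/- Let M be a field of characteristic 2 containing F_{q^2}, where q = 2^n, and let u ∈ M with u ∉ F_{q^2}. Then the values ⟨ζu⟩/w := (ζu + (ζu)^{-1})/w, as ζ ranges over the (q+1)-st roots of unity and w ranges over F_q^×, are pairwise distinct. -/

import Mathlib

lemma mem_range_of_pow_eq_aux (n q : ℕ) (hn : 0 < n) (hq : q = 2 ^ n)
    (M : Type*) [Field M] [Algebra (GaloisField 2 (2 * n)) M]
    (x : M) (hx : x ^ q ^ 2 = x) :
    x ∈ Set.range (algebraMap (GaloisField 2 (2 * n)) M) := by
  classical
  by_contra hxr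
  set K := GaloisField 2 (2 * n)
  have hcard : Nat.card K = q ^ 2 := by
    rw [GaloisField.card 2 (2 * n) (by omega), hq, ← pow_mul, Nat.mul_comm]
  have : Fintype K := Fintype.ofFinite K
  have hcard' : Fintype.card K = q ^ 2 := by
    rw [← Nat.card_eq_fintype_card, hcard]
  have hq2 : 1 < q ^ 2 := by
    have : 2 ≤ q := by subst hq; exact Nat.one_lt_two_pow (by omega)
    nlinarith
  set f : Polynomial M := Polynomial.X ^ (q ^ 2) - Polynomial.X with hf
  have hfne : f ≠ 0 := FiniteField.X_pow_card_sub_X_ne_zero M hq2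
  have hdeg : f.natDegree = q ^ 2 := FiniteField.X_pow_card_sub_X_natDegree_eq M hq2
  have hroot : ∀ y : M, y ^ q ^ 2 = y → y ∈ f.roots := by
    intro y hy
    rw [Polynomial.mem_roots hfne]
    simp [hf, Polynomial.IsRoot, hy]
  set T : Finset M := Finset.univ.image (algebraMap K M) with hT
  have hTcard : T.card = q ^ 2 := by
    rw [hT, Finset.card_image_of_injective _ (algebraMap K M).injective,
      Finset.card_univ, hcard']
  have hsub : insert x T ⊆ f.roots.toFinset := by
    intro y hy
    rw [Finset.mem_insert] at hy
    rw [Multiset.mem_toFinset]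
    rcases hy with rfl | hy
    · exact hroot _ hx
    · rw [hT, Finset.mem_image] at hy
      obtain ⟨k, -, rfl⟩ := hy
      apply hroot
      rw [← map_pow]
      congr 1
      rw [← hcard']
      exact FiniteField.pow_card k
  have hxT : x ∉ T := by
    intro hxt
    rw [hT, Finset.mem_image] at hxt
    obtain ⟨k, -, rfl⟩ := hxt
    exact hxr ⟨k, rfl⟩
  have h1 : (insert x T).card = q ^ 2 + 1 := by rw [Finset.card_insert_of_notMem hxT, hTcard]
  have h2 := Finset.card_le_card hsub
  have h3 := f.roots.toFinset_card_le
  have h4 := f.card_roots'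
  omega

/-- Let `M` be a field of characteristic 2 containing `F_(q²)` (`q = 2^n`), and let
`u ∈ M` with `u ∉ F_(q²)`.  Then the values `⟨ζu⟩/w = (ζu + (ζu)⁻¹)/w`, as `ζ` ranges
over the `(q+1)`-st roots of unity and `w` over `F_q^×` (the elements of `M` with
`w^q = w`, `w ≠ 0`), are pairwise distinct. -/
theorem distinct_values (n : ℕ) (hn : 0 < n) (q : ℕ) (hq : q = 2 ^ n)
    (M : Type*) [Field M] [CharP M 2] [Algebra (GaloisField 2 (2 * n)) M]
    (u : M) (hu : u ∉ Set.range (algebraMap (GaloisField 2 (2 * n)) M))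
    (ζ₁ ζ₂ w₁ w₂ : M)
    (hζ₁ : ζ₁ ^ (q + 1) = 1) (hζ₂ : ζ₂ ^ (q + 1) = 1)
    (hw₁ : w₁ ^ q = w₁) (hw₁0 : w₁ ≠ 0) (hw₂ : w₂ ^ q = w₂) (hw₂0 : w₂ ≠ 0)
    (h : (ζ₁ * u + (ζ₁ * u)⁻¹) / w₁ = (ζ₂ * u + (ζ₂ * u)⁻¹) / w₂) :
    ζ₁ = ζ₂ ∧ w₁ = w₂ := by
  have mem_range_of_pow_eq : ∀ x : M, x ^ q ^ 2 = x →
      x ∈ Set.range (algebraMap (GaloisField 2 (2 * n)) M) :=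
    fun x hx => mem_range_of_pow_eq_aux n q hn hq M x hx
  have htwo : (2 : M) = 0 := by
    have := CharP.cast_eq_zero M 2; exact_mod_cast this
  have hqge : 2 ≤ q := by subst hq; exact Nat.one_lt_two_pow (by omega)
  have hu0 : u ≠ 0 := fun h0 => hu ⟨0, by simp [h0]⟩
  have hζ₁0 : ζ₁ ≠ 0 := fun h0 => by simp [h0, zero_pow] at hζ₁
  have hζ₂0 : ζ₂ ≠ 0 := fun h0 => by simp [h0, zero_pow] at hζ₂
  have h2n : q ^ 2 = 2 ^ (2 * n) := by rw [hq, ← pow_mul]; ring_nf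
  have hq2eq : q ^ 2 = (q + 1) * (q - 1) + 1 := by
    obtain ⟨k, rfl⟩ : ∃ k, q = k + 2 := ⟨q - 2, by omega⟩
    simp; ring
  have hζ₁q : ζ₁ ^ q ^ 2 = ζ₁ := by
    rw [hq2eq, pow_succ, pow_mul, hζ₁, one_pow, one_mul]
  have hζ₂q : ζ₂ ^ q ^ 2 = ζ₂ := by
    rw [hq2eq, pow_succ, pow_mul, hζ₂, one_pow, one_mul]
  have hw₁q : w₁ ^ q ^ 2 = w₁ := by rw [sq, pow_mul, hw₁, hw₁]
  have hw₂q : w₂ ^ q ^ 2 = w₂ := by rw [sq, pow_mul, hw₂, hw₂]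
  have hmul : ∀ x y : M, x ^ q ^ 2 = x → y ^ q ^ 2 = y → (x * y) ^ q ^ 2 = x * y := by
    intro x y hx hy; rw [mul_pow, hx, hy]
  have hadd : ∀ x y : M, x ^ q ^ 2 = x → y ^ q ^ 2 = y → (x + y) ^ q ^ 2 = x + y := by
    intro x y hx hy; rw [h2n, add_pow_char_pow, ← h2n, hx, hy]
  have hsq' : ∀ x : M, x ^ q ^ 2 = x → (x ^ 2) ^ q ^ 2 = x ^ 2 := by
    intro x hx; rw [← pow_mul, Nat.mul_comm, pow_mul, hx]
  -- key equation
  have key : u ^ 2 * (w₂ * ζ₁ ^ 2 * ζ₂ + w₁ * ζ₁ * ζ₂ ^ 2) = w₁ * ζ₁ + w₂ * ζ₂ := by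
    apply mul_left_cancel₀ hu0
    field_simp at h
    linear_combination u * h + (u ^ 3 * w₁ * ζ₁ * ζ₂ ^ 2 - u * w₂ * ζ₂) * htwo
  have ha0 : w₂ * ζ₁ ^ 2 * ζ₂ + w₁ * ζ₁ * ζ₂ ^ 2 = 0 := by
    by_contra ha0
    apply hu
    have haq : (w₂ * ζ₁ ^ 2 * ζ₂ + w₁ * ζ₁ * ζ₂ ^ 2) ^ q ^ 2
        = w₂ * ζ₁ ^ 2 * ζ₂ + w₁ * ζ₁ * ζ₂ ^ 2 :=
      hadd _ _ (hmul _ _ (hmul _ _ hw₂q (hsq' _ hζ₁q)) hζ₂q)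
        (hmul _ _ (hmul _ _ hw₁q hζ₁q) (hsq' _ hζ₂q))
    have hbq : (w₁ * ζ₁ + w₂ * ζ₂) ^ q ^ 2 = w₁ * ζ₁ + w₂ * ζ₂ :=
      hadd _ _ (hmul _ _ hw₁q hζ₁q) (hmul _ _ hw₂q hζ₂q)
    have hu2 : u ^ 2 = (w₁ * ζ₁ + w₂ * ζ₂) / (w₂ * ζ₁ ^ 2 * ζ₂ + w₁ * ζ₁ * ζ₂ ^ 2) := by
      rw [eq_div_iff ha0]
      linear_combination key
    have hu2q : (u ^ 2) ^ q ^ 2 = u ^ 2 := by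
      rw [hu2, div_pow, haq, hbq]
    obtain ⟨c, hc⟩ := mem_range_of_pow_eq (u ^ 2) hu2q
    obtain ⟨d, hd⟩ : ∃ d : GaloisField 2 (2 * n), d ^ 2 = c := by
      have hinj : Function.Injective (fun d : GaloisField 2 (2 * n) => d ^ 2) := by
        intro x y hxy
        exact frobenius_inj (GaloisField 2 (2 * n)) 2 (by simpa [frobenius_def] using hxy)
      exact (Finite.injective_iff_surjective.mp hinj) c
    refine ⟨d, ?_⟩
    have hsqeq : (algebraMap (GaloisField 2 (2 * n)) M d) ^ 2 = u ^ 2 := by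
      rw [← map_pow, hd, hc]
    exact frobenius_inj M 2 (by simpa [frobenius_def] using hsqeq)
  have hb0 : w₁ * ζ₁ + w₂ * ζ₂ = 0 := by rw [← key, ha0, mul_zero]
  have e1 : w₂ * ζ₁ = w₁ * ζ₂ := by
    have h' : ζ₁ * ζ₂ * (w₂ * ζ₁) = ζ₁ * ζ₂ * (w₁ * ζ₂) := by
      linear_combination ha0 - ζ₁ * ζ₂ ^ 2 * w₁ * htwo
    exact mul_left_cancel₀ (mul_ne_zero hζ₁0 hζ₂0) h'
  have e2 : w₁ * ζ₁ = w₂ * ζ₂ := by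
    linear_combination hb0 - w₂ * ζ₂ * htwo
  have hw : w₁ = w₂ := by
    have h' : w₁ ^ 2 * (ζ₁ * ζ₂) = w₂ ^ 2 * (ζ₁ * ζ₂) := by
      linear_combination w₁ * ζ₂ * e2 - w₂ * ζ₂ * e1
    have hsq2 : w₁ ^ 2 = w₂ ^ 2 :=
      mul_right_cancel₀ (mul_ne_zero hζ₁0 hζ₂0) h'
    exact frobenius_inj M 2 (by simpa [frobenius_def] using hsq2)
  refine ⟨?_, hw⟩
  rw [hw] at e2
  exact mul_left_cancel₀ hw₂0 e2
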